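/- Let $\Pi$ be the cycle partition of a uniform random permutation of $[n]$ conditioned to have $k$ cycles, and let $B_i$ indicate that $i$ is the smallest element of its cycle. Then $\Pr[B_n = 1] = c(n-1,k-1)/c(n,k)$, where $c(n,k)$ are unsigned Stirling numbers of the first kind, and this probability is increasing in $k$ for $1 \le k \le n$. -/

import Mathlib

open Finset

/-- Unsigned Stirling numbers of the first kind. -/
def stirlingFirst : ℕ → ℕ → ℕ
  | 0, k => if k = 0 then 1 else 0
  | n + 1, k =>
      if k = 0 then 0
      else n * stirlingFirst n k + stirlingFirst n (k - 1)

open Equiv Equiv.Perm List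

lemma stirling_zero_right (n : ℕ) (hn : 1 ≤ n) : stirlingFirst n 0 = 0 := by
  cases n with
  | zero => omega
  | succ m => simp [stirlingFirst]

lemma stirling_succ (n k : ℕ) :
    stirlingFirst (n + 1) (k + 1) = n * stirlingFirst n (k + 1) + stirlingFirst n k := by
  simp [stirlingFirst]

lemma stirling_eq_zero_of_lt : ∀ n k, n < k → stirlingFirst n k = 0 := by
  intro n
  induction n with
  | zero => intro k hk; simp [stirlingFirst]; omega
  | succ m ih =>
    intro k hk
    cases k with
    | zero => omega
    | succ j =>
      rw [stirling_succ, ih _ (by omega), ih j (by omega)]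
      simp

lemma stirling_pos : ∀ n k, 1 ≤ k → k ≤ n → 0 < stirlingFirst n k := by
  intro n
  induction n with
  | zero => intro k h1 h2; omega
  | succ m ih =>
    intro k h1 h2
    cases k with
    | zero => omega
    | succ j =>
      rw [stirling_succ]
      rcases Nat.eq_zero_or_pos j with hj | hj
      · subst hj
        rcases Nat.eq_zero_or_pos m with hm | hm
        · subst hm; simp [stirlingFirst]
        · have := ih 1 le_rfl hm
          positivity
      · have := ih j hj (by omega)
        omega

lemma stirling_logConcave : ∀ m j,
    stirlingFirst m j * stirlingFirst m (j + 2) ≤ stirlingFirst m (j + 1) ^ 2 := by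
  intro m
  induction m with
  | zero =>
    intro j
    rw [show stirlingFirst 0 (j+2) = 0 by simp [stirlingFirst]]
    simp
  | succ m ih =>
    -- first derive the 3-step inequality at level m
    have M : ∀ i, stirlingFirst m i * stirlingFirst m (i + 3) ≤
        stirlingFirst m (i + 1) * stirlingFirst m (i + 2) := by
      intro i
      rcases Nat.eq_zero_or_pos (stirlingFirst m i) with h0 | h0
      · simp [h0]
      rcases Nat.eq_zero_or_pos (stirlingFirst m (i + 3)) with h3 | h3
      · simp [h3]
      have hi : 1 ≤ i + 3 ∧ i + 3 ≤ m := by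
        constructor
        · omega
        · by_contra h
          exact absurd (stirling_eq_zero_of_lt m (i+3) (by omega)) (by omega)
      have h1 : 0 < stirlingFirst m (i + 1) := stirling_pos m (i+1) (by omega) (by omega)
      have h2 : 0 < stirlingFirst m (i + 2) := stirling_pos m (i+2) (by omega) (by omega)
      have key := Nat.mul_le_mul (ih i) (ih (i + 1))
      -- (s_i s_{i+2}) (s_{i+1} s_{i+3}) ≤ s_{i+1}^2 s_{i+2}^2
      have hpos : 0 < stirlingFirst m (i + 1) * stirlingFirst m (i + 2) := by positivity
      nlinarith [key, h1, h2]
    intro j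
    cases j with
    | zero =>
      rw [show stirlingFirst (m+1) 0 = 0 from stirling_zero_right (m+1) (by omega)]
      simp
    | succ i =>
      rw [stirling_succ, stirling_succ, show i + 1 + 2 = (i + 2) + 1 by ring,
        show i + 1 + 1 = (i + 1) + 1 by ring, stirling_succ]
      have l0 := ih i
      have l1 := ih (i + 1)
      have m0 := M i
      simp only [show i + 1 + 2 = i + 3 from rfl, show i + 1 + 1 = i + 2 from rfl,
        show i + 2 + 1 = i + 3 from rfl] at l0 l1 m0 ⊢
      nlinarith [Nat.mul_le_mul_left (m * m) l1, Nat.mul_le_mul_left m m0, l0]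


variable {α : Type*} [DecidableEq α] [Fintype α]

lemma cycle_extend {c : Perm α} (hc : c.IsCycle) {x y : α}
    (hy : y ∈ c.support) (hx : x ∉ c.support) :
    (swap x y * c).IsCycle ∧ (swap x y * c).support = insert x c.support := by
  have hcy : c y ≠ y := Equiv.Perm.mem_support.mp hy
  have hco : c.cycleOf y = c := hc.cycleOf_eq hcy
  set l := c.toList y with hl
  have hlen : l.length = c.support.card := by
    rw [hl, Equiv.Perm.length_toList, hco]
  have h2 : 2 ≤ l.length := hlen ▸ hc.two_le_card_support
  have hform : l.formPerm = c := by rw [hl, Equiv.Perm.formPerm_toList, hco]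
  have hnodup : l.Nodup := Equiv.Perm.nodup_toList c y
  have hmeml : ∀ z, z ∈ l ↔ z ∈ c.support := by
    intro z
    rw [hl, Equiv.Perm.mem_toList_iff]
    constructor
    · rintro ⟨hsc, _⟩
      exact hsc.mem_support_iff.mp hy
    · intro hz
      exact ⟨hc.sameCycle hcy (Equiv.Perm.mem_support.mp hz), hy⟩
  have hxl : x ∉ l := fun h => hx ((hmeml x).mp h)
  obtain ⟨a, t, hat⟩ : ∃ a t, l = a :: t :=
    List.exists_cons_of_ne_nil (by intro h; rw [h] at h2; simp at h2)
  have hat' : c.toList y = a :: t := by rw [← hl]; exact hat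
  have hay : y = a := by
    have h0 := Equiv.Perm.getElem_toList c y 0 (by rw [hat']; simp)
    simpa [hat'] using h0.symm
  subst hay
  have hkey : swap x y * c = (x :: l).formPerm := by
    rw [hat, List.formPerm_cons_cons, ← hat, hform]
  have hnd : (x :: l).Nodup := List.nodup_cons.mpr ⟨hxl, hnodup⟩
  have hlen2 : 2 ≤ (x :: l).length := by simp; omega
  constructor
  · rw [hkey]; exact List.isCycle_formPerm hnd hlen2
  · rw [hkey, List.support_formPerm_of_nodup _ hnd (by
      intro z hz
      rw [hat] at hz
      simp at hz)]
    ext z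
    simp only [List.toFinset_cons, Finset.mem_insert, List.mem_toFinset]
    rw [hmeml]

lemma swap_mul_data {f : Perm α} {x y : α} (hx : x ∉ f.support) (hxy : y ≠ x) :
    (swap x y * f).support = insert x (insert y f.support) ∧
    Multiset.card (swap x y * f).cycleType
      = Multiset.card f.cycleType + (if y ∈ f.support then 0 else 1) := by
  by_cases hy : y ∈ f.support
  · simp only [hy, if_true, add_zero]
    have hcmem : f.cycleOf y ∈ f.cycleFactorsFinset :=
      Equiv.Perm.cycleOf_mem_cycleFactorsFinset_iff.mpr hy
    set c := f.cycleOf y with hc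
    have hcc : c.IsCycle := (Equiv.Perm.mem_cycleFactorsFinset_iff.mp hcmem).1
    have hyc : y ∈ c.support := by
      rw [hc, Equiv.Perm.mem_support_cycleOf_iff]
      exact ⟨Equiv.Perm.SameCycle.refl f y, hy⟩
    have hsub : c.support ⊆ f.support := Equiv.Perm.mem_cycleFactorsFinset_support_le hcmem
    have hxc : x ∉ c.support := fun h => hx (hsub h)
    have hgd : Equiv.Perm.Disjoint (f * c⁻¹) c :=
      Equiv.Perm.disjoint_mul_inv_of_mem_cycleFactorsFinset hcmem
    set g := f * c⁻¹ with hg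
    have hf : f = g * c := by rw [hg]; simp [mul_assoc]
    have hsupf : f.support = g.support ∪ c.support := by
      conv_lhs => rw [hf]
      exact hgd.support_mul
    have hdsup : _root_.Disjoint g.support c.support := hgd.disjoint_support
    have hyg : y ∉ g.support := Finset.disjoint_right.mp hdsup hyc
    have hxg : x ∉ g.support := fun h => hx (hsupf ▸ Finset.mem_union_left _ h)
    obtain ⟨hc'cyc, hc'sup⟩ := cycle_extend hcc hyc hxc
    have hdsg : Equiv.Perm.Disjoint (swap x y) g := by
      rw [Equiv.Perm.disjoint_iff_disjoint_support, Equiv.Perm.support_swap hxy.symm]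
      exact Finset.disjoint_left.mpr (by
        intro a ha
        simp only [Finset.mem_insert, Finset.mem_singleton] at ha
        rcases ha with rfl | rfl
        exacts [hxg, hyg])
    have heq : swap x y * f = g * (swap x y * c) := by
      rw [hf, ← mul_assoc, hdsg.commute.eq, mul_assoc]
    have hd' : Equiv.Perm.Disjoint g (swap x y * c) := by
      rw [Equiv.Perm.disjoint_iff_disjoint_support, hc'sup]
      rw [Finset.disjoint_insert_right]
      exact ⟨hxg, hdsup⟩
    constructor
    · rw [heq, hd'.support_mul, hc'sup, hsupf, Finset.union_insert,
        Finset.insert_eq_self.mpr (Finset.mem_union_right _ hyc)]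
    · rw [heq, hd'.cycleType_mul, hc'cyc.cycleType]
      conv_rhs => rw [hf, hgd.cycleType_mul, hcc.cycleType]
      simp
  · have hd : Equiv.Perm.Disjoint (swap x y) f := by
      rw [Equiv.Perm.disjoint_iff_disjoint_support, Equiv.Perm.support_swap hxy.symm]
      exact Finset.disjoint_left.mpr (by
        intro a ha
        simp only [Finset.mem_insert, Finset.mem_singleton] at ha
        rcases ha with rfl | rfl
        exacts [hx, hy])
    constructor
    · rw [hd.support_mul, Equiv.Perm.support_swap hxy.symm]
      ext z; simp [or_assoc]
    · rw [hd.cycleType_mul, (Equiv.Perm.isCycle_swap hxy.symm).cycleType]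
      simp [hy]

def cc {β : Type*} [DecidableEq β] [Fintype β] (σ : Perm β) : ℕ :=
  Multiset.card σ.cycleType + (Fintype.card β - σ.support.card)

lemma support_card_le (σ : Perm α) : σ.support.card ≤ Fintype.card α := by
  simpa using Finset.card_le_univ σ.support

lemma cc_filter_fixed (σ : Perm α) :
    Multiset.card σ.cycleType + (univ.filter fun x => σ x = x).card = cc σ := by
  unfold cc
  congr 1
  have h := Finset.card_filter_add_card_filter_not
    (s := (univ : Finset α)) (p := fun x => σ x = x)
  have hs : σ.support = univ.filter (fun x => ¬ σ x = x) := by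
    ext z; simp [Equiv.Perm.mem_support]
  rw [Finset.card_univ] at h
  rw [hs]
  omega

lemma cc_conj (d σ : Perm α) : cc (d * σ * d⁻¹) = cc σ := by
  unfold cc
  rw [Equiv.Perm.cycleType_conj, Equiv.Perm.card_support_conj]

def fsucc (n : ℕ) : Fin n ≃ {x : Fin (n + 1) // x ≠ 0} where
  toFun i := ⟨i.succ, Fin.succ_ne_zero i⟩
  invFun x := (x : Fin (n + 1)).pred x.2
  left_inv i := by simp
  right_inv x := by simp

lemma decompose_eq {n : ℕ} (p : Fin (n + 1)) (τ : Perm (Fin n)) :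
    Equiv.Perm.decomposeFin.symm (p, τ) = swap 0 p * τ.extendDomain (fsucc n) := by
  ext z
  refine Fin.cases ?_ (fun i => ?_) z
  · rw [Equiv.Perm.decomposeFin_symm_apply_zero, Equiv.Perm.mul_apply,
      Equiv.Perm.extendDomain_apply_not_subtype _ _ (by simp), swap_apply_left]
  · have hext : τ.extendDomain (fsucc n) i.succ = (τ i).succ := by
      rw [Equiv.Perm.extendDomain_apply_subtype τ (fsucc n) (b := i.succ) (Fin.succ_ne_zero i)]
      simp [fsucc]
    rw [Equiv.Perm.decomposeFin_symm_apply_succ, Equiv.Perm.mul_apply, hext]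

lemma cc_decompose {n : ℕ} (p : Fin (n + 1)) (τ : Perm (Fin n)) :
    cc (Equiv.Perm.decomposeFin.symm (p, τ)) = cc τ + (if p = 0 then 1 else 0) := by
  rw [decompose_eq]
  set τ' := τ.extendDomain (fsucc n) with hτ'
  have hct : τ'.cycleType = τ.cycleType := Equiv.Perm.cycleType_extendDomain _
  have hsup : τ'.support.card = τ.support.card := Equiv.Perm.card_support_extend_domain _
  have h0 : (0 : Fin (n + 1)) ∉ τ'.support := by
    rw [hτ', Equiv.Perm.support_extend_domain]
    intro hmem
    rw [Finset.mem_map] at hmem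
    obtain ⟨a, -, ha⟩ := hmem
    exact (fsucc n a).2 ha
  have hτle : τ.support.card ≤ n := by simpa using support_card_le τ
  by_cases hp : p = 0
  · subst hp
    rw [Equiv.swap_self, show (Equiv.refl (Fin (n + 1))) = (1 : Perm (Fin (n + 1))) from rfl,
      one_mul]
    unfold cc
    rw [hct, hsup, Fintype.card_fin, Fintype.card_fin]
    simp only [if_pos rfl]
    simp
    omega
  · obtain ⟨hsup2, hct2⟩ := swap_mul_data h0 hp
    unfold cc
    rw [hct2, hct, hsup2, Fintype.card_fin, Fintype.card_fin]
    have h0i : (0 : Fin (n + 1)) ∉ insert p τ'.support := by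
      simp [Ne.symm hp, h0]
    have hcard1 : (insert (0 : Fin (n+1)) (insert p τ'.support)).card
        = (insert p τ'.support).card + 1 := Finset.card_insert_of_notMem h0i
    have hcard2 : (insert p τ'.support).card = τ'.support.card + (if p ∈ τ'.support then 0 else 1) := by
      by_cases hps : p ∈ τ'.support
      · simp [hps, Finset.insert_eq_self.mpr hps]
      · simp [hps, Finset.card_insert_of_notMem hps]
    have hbound : (insert (0 : Fin (n+1)) (insert p τ'.support)).card ≤ n + 1 := by
      simpa using Finset.card_le_univ (insert (0 : Fin (n+1)) (insert p τ'.support))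
    rw [if_neg hp]
    by_cases hps : p ∈ τ'.support <;> simp only [hps, if_true, if_false] at hcard2 ⊢ <;> omega

lemma count_cc : ∀ (n k : ℕ),
    (univ.filter fun σ : Perm (Fin n) => cc σ = k).card = stirlingFirst n k := by
  intro n
  induction n with
  | zero =>
    intro k
    have h1 : ∀ σ : Perm (Fin 0), cc σ = 0 := by
      intro σ
      have : σ = 1 := Subsingleton.elim _ _
      subst this
      simp [cc, Equiv.Perm.cycleType_one]
    cases k with
    | zero =>
      rw [Finset.filter_true_of_mem (fun σ _ => h1 σ)]
      simp only [stirlingFirst, if_pos rfl]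
      rw [Finset.card_univ]
      simp
    | succ j =>
      rw [Finset.filter_false_of_mem (fun σ _ => by rw [h1 σ]; omega)]
      simp [stirlingFirst]
  | succ n ih =>
    intro k
    have hstep : (univ.filter fun σ : Perm (Fin (n+1)) => cc σ = k).card
        = (univ.filter fun x : Fin (n+1) × Perm (Fin n) =>
            cc x.2 + (if x.1 = 0 then 1 else 0) = k).card := by
      refine Finset.card_nbij' (fun σ => Equiv.Perm.decomposeFin σ)
        (fun x => Equiv.Perm.decomposeFin.symm x) ?_ ?_ ?_ ?_
      · intro σ hσ
        rw [Finset.mem_coe, Finset.mem_filter] at hσ ⊢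
        refine ⟨Finset.mem_univ _, ?_⟩
        have h := cc_decompose (Equiv.Perm.decomposeFin σ).1 (Equiv.Perm.decomposeFin σ).2
        rw [Prod.mk.eta, Equiv.symm_apply_apply] at h
        rw [← h]
        exact hσ.2
      · intro x hx
        rw [Finset.mem_coe, Finset.mem_filter] at hx ⊢
        refine ⟨Finset.mem_univ _, ?_⟩
        have h := cc_decompose x.1 x.2
        rw [Prod.mk.eta] at h
        rw [h]
        exact hx.2
      · intro σ _; exact Equiv.symm_apply_apply _ _
      · intro x _; exact Equiv.apply_symm_apply _ _
    rw [hstep]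
    have hsplit : (univ.filter fun x : Fin (n+1) × Perm (Fin n) =>
        cc x.2 + (if x.1 = 0 then 1 else 0) = k)
        = ((univ.filter fun p : Fin (n+1) => p = 0) ×ˢ
            (univ.filter fun τ : Perm (Fin n) => cc τ + 1 = k))
          ∪ ((univ.filter fun p : Fin (n+1) => ¬ p = 0) ×ˢ
            (univ.filter fun τ : Perm (Fin n) => cc τ = k)) := by
      rw [← Finset.filter_product, ← Finset.filter_product, ← Finset.filter_or,
        ← Finset.univ_product_univ]
      apply Finset.filter_congr
      rintro ⟨p, τ⟩ -
      by_cases hp : p = 0 <;> simp [hp]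
    rw [hsplit, Finset.card_union_of_disjoint (by
      rw [Finset.disjoint_left]
      rintro ⟨p, τ⟩ h1 h2
      rw [Finset.mem_product, Finset.mem_filter] at h1 h2
      exact (h2.1.2 h1.1.2))]
    rw [Finset.card_product, Finset.card_product]
    have hp0 : (univ.filter fun p : Fin (n+1) => p = 0).card = 1 := by
      rw [Finset.filter_eq']
      simp
    have hpn : (univ.filter fun p : Fin (n+1) => ¬ p = 0).card = n := by
      have h := Finset.card_filter_add_card_filter_not
        (s := (univ : Finset (Fin (n+1)))) (p := fun p => p = 0)
      rw [Finset.card_univ, Fintype.card_fin] at h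
      omega
    rw [hp0, hpn, one_mul, ih]
    cases k with
    | zero =>
      rw [Finset.filter_false_of_mem (fun τ _ => by omega)]
      simp only [Finset.card_empty, zero_add]
      cases n with
      | zero => simp [stirlingFirst]
      | succ m => rw [stirling_zero_right (m+1) (by omega),
          stirling_zero_right (m+2) (by omega), Nat.mul_zero]
    | succ j =>
      have : (univ.filter fun τ : Perm (Fin n) => cc τ + 1 = j + 1)
          = (univ.filter fun τ : Perm (Fin n) => cc τ = j) := by
        apply Finset.filter_congr
        intro τ _
        simp
      rw [this, ih, stirling_succ]
      ring

lemma count_fix_transfer (m k : ℕ) :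
    (univ.filter fun σ : Perm (Fin (m+1)) =>
      cc σ = k ∧ σ ⟨m, Nat.lt_succ_self m⟩ = ⟨m, Nat.lt_succ_self m⟩).card
    = (univ.filter fun σ : Perm (Fin (m+1)) => cc σ = k ∧ σ 0 = 0).card := by
  set e : Fin (m+1) := ⟨m, Nat.lt_succ_self m⟩ with he
  set d := Equiv.swap (0 : Fin (m+1)) e with hd
  have hdd : d * d = 1 := Equiv.swap_mul_self _ _
  have hdinv : d⁻¹ = d := Equiv.swap_inv _ _
  have hccd : ∀ σ : Perm (Fin (m+1)), cc (d * σ * d) = cc σ := by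
    intro σ
    rw [show d * σ * d = d * σ * d⁻¹ by rw [hdinv]]
    exact cc_conj d σ
  have hlinv : ∀ σ : Perm (Fin (m+1)), d * (d * σ * d) * d = σ := by
    intro σ
    simp only [← mul_assoc]
    rw [hdd, one_mul, mul_assoc, hdd, mul_one]
  refine Finset.card_nbij' (fun σ => d * σ * d) (fun σ => d * σ * d) ?_ ?_
    (fun σ _ => hlinv σ) (fun σ _ => hlinv σ)
  · intro σ hσ
    rw [Finset.mem_coe, Finset.mem_filter] at hσ ⊢
    obtain ⟨-, h1, h2⟩ := hσ
    refine ⟨Finset.mem_univ _, by rw [hccd]; exact h1, ?_⟩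
    show d (σ (d 0)) = 0
    rw [hd, Equiv.swap_apply_left]
    rw [h2]
    exact Equiv.swap_apply_right _ _
  · intro σ hσ
    rw [Finset.mem_coe, Finset.mem_filter] at hσ ⊢
    obtain ⟨-, h1, h2⟩ := hσ
    refine ⟨Finset.mem_univ _, by rw [hccd]; exact h1, ?_⟩
    show d (σ (d e)) = e
    rw [hd, Equiv.swap_apply_right]
    rw [h2]
    exact Equiv.swap_apply_left _ _

lemma count_fix0 (m k : ℕ) (hk : 1 ≤ k) :
    (univ.filter fun σ : Perm (Fin (m+1)) => cc σ = k ∧ σ 0 = 0).card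
    = stirlingFirst m (k - 1) := by
  rw [← count_cc m (k - 1)]
  refine Finset.card_nbij' (fun σ => (Equiv.Perm.decomposeFin σ).2)
    (fun τ => Equiv.Perm.decomposeFin.symm (0, τ)) ?_ ?_ ?_ ?_
  · intro σ hσ
    rw [Finset.mem_coe, Finset.mem_filter] at hσ ⊢
    obtain ⟨-, h1, h2⟩ := hσ
    have hfst : (Equiv.Perm.decomposeFin σ).1 = 0 := by
      have h := Equiv.Perm.decomposeFin_symm_apply_zero
        (Equiv.Perm.decomposeFin σ).1 (Equiv.Perm.decomposeFin σ).2
      rw [Prod.mk.eta, Equiv.symm_apply_apply] at h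
      rw [← h]
      exact h2
    have hσeq : Equiv.Perm.decomposeFin.symm (0, (Equiv.Perm.decomposeFin σ).2) = σ := by
      rw [← hfst, Prod.mk.eta, Equiv.symm_apply_apply]
    have h := cc_decompose (0 : Fin (m+1)) (Equiv.Perm.decomposeFin σ).2
    rw [hσeq, h1, if_pos rfl] at h
    refine ⟨Finset.mem_univ _, ?_⟩
    show cc (Equiv.Perm.decomposeFin σ).2 = k - 1
    omega
  · intro τ hτ
    rw [Finset.mem_coe, Finset.mem_filter] at hτ ⊢
    obtain ⟨-, h1⟩ := hτ
    have h := cc_decompose (0 : Fin (m+1)) τ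
    rw [if_pos rfl, h1] at h
    exact ⟨Finset.mem_univ _,
      by rw [h]; omega,
      Equiv.Perm.decomposeFin_symm_apply_zero 0 τ⟩
  · intro σ hσ
    rw [Finset.mem_coe, Finset.mem_filter] at hσ
    obtain ⟨-, h1, h2⟩ := hσ
    have hfst : (Equiv.Perm.decomposeFin σ).1 = 0 := by
      have h := Equiv.Perm.decomposeFin_symm_apply_zero
        (Equiv.Perm.decomposeFin σ).1 (Equiv.Perm.decomposeFin σ).2
      rw [Prod.mk.eta, Equiv.symm_apply_apply] at h
      rw [← h]
      exact h2
    show Equiv.Perm.decomposeFin.symm (0, (Equiv.Perm.decomposeFin σ).2) = σ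
    rw [← hfst, Prod.mk.eta, Equiv.symm_apply_apply]
  · intro τ _
    show (Equiv.Perm.decomposeFin (Equiv.Perm.decomposeFin.symm (0, τ))).2 = τ
    rw [Equiv.apply_symm_apply]

lemma stirling_ratio_key (m j : ℕ) :
    stirlingFirst m j * stirlingFirst (m+1) (j+2) ≤
    stirlingFirst m (j+1) * stirlingFirst (m+1) (j+1) := by
  have e1 : stirlingFirst (m+1) (j+1) = m * stirlingFirst m (j+1) + stirlingFirst m j :=
    stirling_succ m j
  have e2 : stirlingFirst (m+1) (j+2) = m * stirlingFirst m (j+2) + stirlingFirst m (j+1) :=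
    stirling_succ m (j+1)
  rw [e1, e2]
  nlinarith [Nat.mul_le_mul_left m (stirling_logConcave m j)]


/-- For a uniform random permutation of `[n]` conditioned to have `k` cycles,
the probability that `n` is the smallest element of its cycle (equivalently,
a fixed point) equals `c(n-1,k-1)/c(n,k)`, and this probability is increasing
in `k` for `1 ≤ k ≤ n`. Cycles are counted as the number of nontrivial cycles
plus the number of fixed points. -/
theorem perm_conditioned_fixed_point_prob (n : ℕ) (hn : 1 ≤ n)
    (cycleCount : Equiv.Perm (Fin n) → ℕ)
    (hcc : ∀ σ, cycleCount σ =
      σ.cycleType.card + (Finset.univ.filter (fun x => σ x = x)).card) :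
    (∀ k : ℕ, 1 ≤ k → k ≤ n →
      ((Finset.univ.filter (fun σ : Equiv.Perm (Fin n) =>
          cycleCount σ = k ∧ σ ⟨n - 1, by omega⟩ = ⟨n - 1, by omega⟩)).card : ℝ) /
        ((Finset.univ.filter (fun σ : Equiv.Perm (Fin n) =>
          cycleCount σ = k)).card : ℝ) =
      (stirlingFirst (n - 1) (k - 1) : ℝ) / (stirlingFirst n k : ℝ)) ∧
    (∀ k : ℕ, 1 ≤ k → k + 1 ≤ n →
      ((Finset.univ.filter (fun σ : Equiv.Perm (Fin n) =>
          cycleCount σ = k ∧ σ ⟨n - 1, by omega⟩ = ⟨n - 1, by omega⟩)).card : ℝ) /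
        ((Finset.univ.filter (fun σ : Equiv.Perm (Fin n) =>
          cycleCount σ = k)).card : ℝ) ≤
      ((Finset.univ.filter (fun σ : Equiv.Perm (Fin n) =>
          cycleCount σ = k + 1 ∧ σ ⟨n - 1, by omega⟩ = ⟨n - 1, by omega⟩)).card : ℝ) /
        ((Finset.univ.filter (fun σ : Equiv.Perm (Fin n) =>
          cycleCount σ = k + 1)).card : ℝ)) := by
  obtain ⟨m, rfl⟩ : ∃ m, n = m + 1 := ⟨n - 1, by omega⟩
  have hccc : ∀ σ : Perm (Fin (m+1)), cycleCount σ = cc σ := fun σ => by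
    rw [hcc σ, cc_filter_fixed]
  have hden : ∀ k, (univ.filter fun σ : Perm (Fin (m+1)) => cycleCount σ = k).card
      = stirlingFirst (m+1) k := by
    intro k
    rw [Finset.filter_congr (fun σ _ => by rw [hccc σ])]
    exact count_cc (m+1) k
  have hnum : ∀ k, 1 ≤ k →
      (univ.filter fun σ : Perm (Fin (m+1)) =>
        cycleCount σ = k ∧ σ ⟨m, Nat.lt_succ_self m⟩ = ⟨m, Nat.lt_succ_self m⟩).card
      = stirlingFirst m (k - 1) := by
    intro k hk
    rw [Finset.filter_congr (fun σ _ => by rw [hccc σ])]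
    rw [count_fix_transfer m k]
    exact count_fix0 m k hk
  constructor
  · intro k hk1 hk2
    show ((univ.filter fun σ : Perm (Fin (m+1)) =>
        cycleCount σ = k ∧ σ ⟨m, Nat.lt_succ_self m⟩ = ⟨m, Nat.lt_succ_self m⟩).card : ℝ) /
      ((univ.filter fun σ : Perm (Fin (m+1)) => cycleCount σ = k).card : ℝ)
      = (stirlingFirst m (k - 1) : ℝ) / (stirlingFirst (m+1) k : ℝ)
    rw [hnum k hk1, hden k]
  · intro k hk1 hk2
    show ((univ.filter fun σ : Perm (Fin (m+1)) =>
        cycleCount σ = k ∧ σ ⟨m, Nat.lt_succ_self m⟩ = ⟨m, Nat.lt_succ_self m⟩).card : ℝ) /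
      ((univ.filter fun σ : Perm (Fin (m+1)) => cycleCount σ = k).card : ℝ)
      ≤ ((univ.filter fun σ : Perm (Fin (m+1)) =>
        cycleCount σ = k + 1 ∧ σ ⟨m, Nat.lt_succ_self m⟩ = ⟨m, Nat.lt_succ_self m⟩).card : ℝ) /
      ((univ.filter fun σ : Perm (Fin (m+1)) => cycleCount σ = k + 1).card : ℝ)
    rw [hnum k hk1, hden k, hnum (k+1) (by omega), hden (k+1)]
    have hd1 : (0 : ℝ) < (stirlingFirst (m+1) k : ℝ) := by
      exact_mod_cast stirling_pos (m+1) k hk1 (by omega)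
    have hd2 : (0 : ℝ) < (stirlingFirst (m+1) (k+1) : ℝ) := by
      exact_mod_cast stirling_pos (m+1) (k+1) (by omega) (by omega)
    rw [div_le_div_iff₀ hd1 hd2]
    obtain ⟨j, rfl⟩ : ∃ j, k = j + 1 := ⟨k - 1, by omega⟩
    have key := stirling_ratio_key m j
    have h1 : j + 1 - 1 = j := rfl
    have h2 : j + 1 + 1 - 1 = j + 1 := rfl
    rw [h1, h2]
    exact_mod_cast key
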